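/- Airy kernel reproducing identity: for x, y ∈ ℝ, ∫₀^∞ Ai(x+z) Ai(y+z) dz = (Ai(x)Ai'(y) - Ai(y)Ai'(x)) / (x - y) for x ≠ y, where Ai is the Airy function. -/

import Mathlib

open MeasureTheory Filter Set

section AiryAux

variable {A : ℝ → ℝ}

private lemma hA' (hd : Differentiable ℝ A) (t : ℝ) : HasDerivAt A (deriv A t) t :=
  (hd t).hasDerivAt

private lemma hBdiff (hODE : ∀ x : ℝ, HasDerivAt (deriv A) (x * A x) x) :
    Differentiable ℝ (deriv A) := fun x => (hODE x).differentiableAt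

private lemma w_hasDeriv (hd : Differentiable ℝ A)
    (hODE : ∀ x, HasDerivAt (deriv A) (x * A x) x) (t : ℝ) :
    HasDerivAt (fun s => A s * deriv A s)
      (deriv A t * deriv A t + t * (A t * A t)) t := by
  have h : HasDerivAt (fun s => A s * deriv A s) _ t := (hA' hd t).mul (hODE t)
  convert h using 1
  ring

private lemma w_mono (hd : Differentiable ℝ A)
    (hODE : ∀ x, HasDerivAt (deriv A) (x * A x) x) :
    MonotoneOn (fun s => A s * deriv A s) (Ici (0:ℝ)) := by
  apply monotoneOn_of_deriv_nonneg (convex_Ici 0)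
  · exact (hd.continuous.mul (hBdiff hODE).continuous).continuousOn
  · exact (hd.mul (hBdiff hODE)).differentiableOn
  · intro t ht
    rw [interior_Ici] at ht
    rw [(w_hasDeriv hd hODE t).deriv]
    have h1 : 0 ≤ deriv A t * deriv A t := mul_self_nonneg _
    have h2 : 0 ≤ A t * A t := mul_self_nonneg _
    nlinarith [(show (0:ℝ) < t from ht).le]

private lemma w_nonpos (hd : Differentiable ℝ A)
    (hODE : ∀ x, HasDerivAt (deriv A) (x * A x) x)
    (hdecay : Tendsto A atTop (nhds 0)) :
    ∀ t ∈ Ici (0:ℝ), A t * deriv A t ≤ 0 := by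
  intro c hc0
  by_contra hcpos
  push_neg at hcpos
  set wc := A c * deriv A c with hwc
  have hwmono := w_mono hd hODE
  have hmono : MonotoneOn (fun s => A s * A s - 2 * wc * s) (Ici c) := by
    apply monotoneOn_of_deriv_nonneg (convex_Ici c)
    · exact ((hd.mul hd).sub ((differentiable_id.const_mul _))).continuous.continuousOn
    · exact ((hd.mul hd).sub ((differentiable_id.const_mul _))).differentiableOn
    · intro t ht
      rw [interior_Ici] at ht
      have hder : HasDerivAt (fun s => A s * A s - 2 * wc * s)
          (deriv A t * A t + A t * deriv A t - 2 * wc * 1) t :=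
        ((hA' hd t).mul (hA' hd t)).sub ((hasDerivAt_id t).const_mul (2 * wc))
      rw [hder.deriv]
      have hwt : wc ≤ A t * deriv A t :=
        hwmono hc0 (show (0:ℝ) ≤ t from le_trans hc0 (show c < t from ht).le) (show c < t from ht).le
      nlinarith
  have hAA : Tendsto (fun t => A t * A t) atTop (nhds 0) := by
    simpa using hdecay.mul hdecay
  have hev1 : ∀ᶠ t in atTop, A t * A t < wc := hAA.eventually (gt_mem_nhds hcpos)
  have hev2 : ∀ᶠ t in atTop, c + 1 ≤ t := eventually_ge_atTop _
  obtain ⟨t, h1, h2⟩ := (hev1.and hev2).exists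
  have hmt := hmono (self_mem_Ici (a := c))
    (show t ∈ Ici c from by simp only [mem_Ici]; linarith) (by linarith)
  simp only at hmt
  nlinarith [mul_self_nonneg (A c)]

private lemma fcont (hd : Differentiable ℝ A)
    (hODE : ∀ x : ℝ, HasDerivAt (deriv A) (x * A x) x) :
    Continuous (fun t : ℝ => deriv A t * deriv A t + t * (A t * A t)) :=
  ((hBdiff hODE).continuous.mul (hBdiff hODE).continuous).add
    (continuous_id.mul (hd.continuous.mul hd.continuous))

private lemma ftc_w (hd : Differentiable ℝ A)
    (hODE : ∀ x : ℝ, HasDerivAt (deriv A) (x * A x) x) (T : ℝ) :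
    (∫ t in (0:ℝ)..T, (deriv A t * deriv A t + t * (A t * A t)))
      = A T * deriv A T - A 0 * deriv A 0 :=
  intervalIntegral.integral_eq_sub_of_hasDerivAt
    (fun t _ => w_hasDeriv hd hODE t)
    ((fcont hd hODE).intervalIntegrable _ _)

private lemma key_int (hd : Differentiable ℝ A)
    (hODE : ∀ x, HasDerivAt (deriv A) (x * A x) x)
    (hdecay : Tendsto A atTop (nhds 0)) :
    IntegrableOn (fun t : ℝ => deriv A t * deriv A t + t * (A t * A t)) (Ioi 0) := by
  apply integrableOn_Ioi_of_intervalIntegral_norm_bounded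
    (-(A 0 * deriv A 0)) 0
    (fun T : ℝ => ((fcont hd hODE).integrableOn_Ioc)) tendsto_id
  filter_upwards [eventually_ge_atTop (0:ℝ)] with T hT
  simp only [id_eq]
  have hcong : (∫ t in (0:ℝ)..T, ‖deriv A t * deriv A t + t * (A t * A t)‖)
      = ∫ t in (0:ℝ)..T, (deriv A t * deriv A t + t * (A t * A t)) := by
    apply intervalIntegral.integral_congr
    intro t ht
    rw [uIcc_of_le hT] at ht
    have ht0 : 0 ≤ t := ht.1
    have : 0 ≤ deriv A t * deriv A t + t * (A t * A t) := by
      nlinarith [mul_self_nonneg (deriv A t), mul_self_nonneg (A t)]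
    simp [Real.norm_of_nonneg this]
  rw [hcong, ftc_w hd hODE]
  have := w_nonpos hd hODE hdecay T hT
  linarith

private lemma Bsq_int (hd : Differentiable ℝ A)
    (hODE : ∀ x, HasDerivAt (deriv A) (x * A x) x)
    (hdecay : Tendsto A atTop (nhds 0)) :
    IntegrableOn (fun t : ℝ => deriv A t * deriv A t) (Ioi 0) := by
  apply (key_int hd hODE hdecay).mono'
    ((hBdiff hODE).continuous.mul (hBdiff hODE).continuous).aestronglyMeasurable
  filter_upwards [ae_restrict_mem measurableSet_Ioi] with t ht
  have ht0 : (0:ℝ) < t := ht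
  have h1 : 0 ≤ deriv A t * deriv A t := mul_self_nonneg _
  have h2 : 0 ≤ A t * A t := mul_self_nonneg _
  rw [show ‖(deriv A * deriv A) t‖ = ‖deriv A t * deriv A t‖ from rfl, Real.norm_of_nonneg h1]
  nlinarith

private lemma Asq_int (hd : Differentiable ℝ A)
    (hODE : ∀ x, HasDerivAt (deriv A) (x * A x) x)
    (hdecay : Tendsto A atTop (nhds 0)) (c : ℝ) :
    IntegrableOn (fun t : ℝ => A t * A t) (Ioi c) := by
  have h1 : IntegrableOn (fun t : ℝ => A t * A t) (Ioi 1) := by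
    apply (((key_int hd hODE hdecay)).mono_set (Ioi_subset_Ioi zero_le_one)).mono'
      (hd.continuous.mul hd.continuous).aestronglyMeasurable
    filter_upwards [ae_restrict_mem measurableSet_Ioi] with t ht
    have ht1 : (1:ℝ) < t := ht
    have h1 : 0 ≤ deriv A t * deriv A t := mul_self_nonneg _
    have h2 : 0 ≤ A t * A t := mul_self_nonneg _
    rw [show ‖(A * A) t‖ = ‖A t * A t‖ from rfl, Real.norm_of_nonneg h2]
    nlinarith
  have h2 : IntegrableOn (fun t : ℝ => A t * A t) (Ioc c 1) :=
    (hd.continuous.mul hd.continuous).integrableOn_Ioc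
  apply (h2.union h1).mono_set
  intro t ht
  rcases le_or_gt t 1 with h | h
  · exact Or.inl ⟨ht, h⟩
  · exact Or.inr h

private lemma Bsq_anti (hd : Differentiable ℝ A)
    (hODE : ∀ x, HasDerivAt (deriv A) (x * A x) x)
    (hdecay : Tendsto A atTop (nhds 0)) :
    AntitoneOn (fun s => deriv A s * deriv A s) (Ici (0:ℝ)) := by
  apply antitoneOn_of_deriv_nonpos (convex_Ici 0)
  · exact ((hBdiff hODE).continuous.mul (hBdiff hODE).continuous).continuousOn
  · exact ((hBdiff hODE).mul (hBdiff hODE)).differentiableOn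
  · intro t ht
    rw [interior_Ici] at ht
    have hder : HasDerivAt (fun s => deriv A s * deriv A s)
        (t * A t * deriv A t + deriv A t * (t * A t)) t := (hODE t).mul (hODE t)
    rw [hder.deriv]
    have := w_nonpos hd hODE hdecay t (show (0:ℝ) ≤ t from (show (0:ℝ) < t from ht).le)
    nlinarith [(show (0:ℝ) < t from ht).le]

private lemma B_to_zero (hd : Differentiable ℝ A)
    (hODE : ∀ x, HasDerivAt (deriv A) (x * A x) x)
    (hdecay : Tendsto A atTop (nhds 0)) :
    Tendsto (deriv A) atTop (nhds 0) := by
  have hBc : Continuous (fun t : ℝ => deriv A t * deriv A t) :=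
    (hBdiff hODE).continuous.mul (hBdiff hODE).continuous
  set F : ℝ → ℝ := fun T => ∫ t in (0:ℝ)..T, deriv A t * deriv A t with hF
  have hI : Tendsto F atTop (nhds (∫ t in Ioi (0:ℝ), deriv A t * deriv A t)) :=
    intervalIntegral_tendsto_integral_Ioi 0 (Bsq_int hd hODE hdecay) tendsto_id
  have hI1 : Tendsto (fun T => F (T + 1)) atTop
      (nhds (∫ t in Ioi (0:ℝ), deriv A t * deriv A t)) :=
    hI.comp (tendsto_atTop_add_const_right atTop 1 tendsto_id)
  have hG : Tendsto (fun T => F (T + 1) - F T) atTop (nhds 0) := by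
    have := hI1.sub hI
    simpa using this
  have hbound : ∀ᶠ T in atTop,
      deriv A (T + 1) * deriv A (T + 1) ≤ F (T + 1) - F T := by
    filter_upwards [eventually_ge_atTop (0:ℝ)] with T hT
    have hadd : F T + (∫ t in T..(T+1), deriv A t * deriv A t) = F (T + 1) :=
      intervalIntegral.integral_add_adjacent_intervals
        (hBc.intervalIntegrable _ _) (hBc.intervalIntegrable _ _)
    have hmono : deriv A (T+1) * deriv A (T+1)
        ≤ ∫ t in T..(T+1), deriv A t * deriv A t := by
      have h0 : (∫ _t in T..(T+1), deriv A (T+1) * deriv A (T+1))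
          = deriv A (T+1) * deriv A (T+1) := by
        rw [intervalIntegral.integral_const]
        simp
      rw [← h0]
      apply intervalIntegral.integral_mono_on (by linarith)
        (intervalIntegrable_const) (hBc.intervalIntegrable _ _)
      intro t ht
      exact Bsq_anti hd hODE hdecay (by simp only [mem_Ici]; linarith [ht.1])
        (by simp only [mem_Ici]; linarith [ht.2]) ht.2
    linarith
  have hsq1 : Tendsto (fun T => deriv A (T+1) * deriv A (T+1)) atTop (nhds 0) :=
    squeeze_zero' (Eventually.of_forall (fun T => mul_self_nonneg _)) hbound hG
  have hsq : Tendsto (fun T => deriv A T * deriv A T) atTop (nhds 0) := by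
    have h := hsq1.comp (tendsto_atTop_add_const_right atTop (-1) tendsto_id)
    have he : ((fun T => deriv A (T + 1) * deriv A (T + 1)) ∘ fun x => x + -1)
        = fun T => deriv A T * deriv A T := by
      funext T; simp [Function.comp]
    simp only [id_eq] at h
    rwa [he] at h
  apply squeeze_zero_norm' (a := fun T => Real.sqrt (deriv A T * deriv A T))
  · filter_upwards with T
    rw [Real.sqrt_mul_self_eq_abs]
    exact le_of_eq (Real.norm_eq_abs _)
  · have hc : Tendsto Real.sqrt (nhds 0) (nhds 0) := by
      simpa using (Real.continuous_sqrt.tendsto 0)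
    exact hc.comp hsq

end AiryAux

theorem airy_kernel_identity
    (Ai : ℝ → ℝ) (hdiff : Differentiable ℝ Ai)
    (hODE : ∀ x, HasDerivAt (deriv Ai) (x * Ai x) x)
    (hdecay : Tendsto Ai atTop (nhds 0))
    (hnorm : Ai 0 = 1 / (3 ^ ((2 : ℝ) / 3) * Real.Gamma (2 / 3))) :
    ∀ x y : ℝ, x ≠ y →
      (∫ z in Set.Ioi (0 : ℝ), Ai (x + z) * Ai (y + z))
        = (Ai x * deriv Ai y - Ai y * deriv Ai x) / (x - y) := by
  intro x y hxy
  have hB := hBdiff hODE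
  -- shifted square integrability
  have shift : ∀ c : ℝ, IntegrableOn (fun z => Ai (c + z) * Ai (c + z)) (Ioi 0) := by
    intro c
    have hpre : (fun z : ℝ => c + z) ⁻¹' (Ioi c) = Ioi 0 := by
      ext z; simp
    have := (measurePreserving_add_left volume c).integrableOn_comp_preimage
      (measurableEmbedding_addLeft c)
      (f := fun t => Ai t * Ai t) (s := Ioi c)
    rw [hpre] at this
    exact this.mpr (Asq_int hdiff hODE hdecay c)
  -- integrability of the product
  have hint : IntegrableOn (fun z => Ai (x + z) * Ai (y + z)) (Ioi 0) := by
    apply ((shift x).add (shift y)).mono'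
      (Continuous.aestronglyMeasurable (by have := hdiff.continuous; fun_prop))
    filter_upwards with z
    simp only [Pi.add_apply]
    rw [Real.norm_eq_abs]
    rcases abs_cases (Ai (x + z) * Ai (y + z)) with ⟨h, _⟩ | ⟨h, _⟩ <;> rw [h] <;>
      nlinarith [sq_nonneg (Ai (x+z) - Ai (y+z)), sq_nonneg (Ai (x+z) + Ai (y+z))]
  -- the Wronskian-type function
  set W : ℝ → ℝ := fun z =>
    Ai (x + z) * deriv Ai (y + z) - Ai (y + z) * deriv Ai (x + z) with hWdef
  have hshiftD : ∀ c z : ℝ, HasDerivAt (fun s => Ai (c + s)) (deriv Ai (c + z)) z := by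
    intro c z
    exact HasDerivAt.comp_const_add c z (hA' hdiff (c + z))
  have hshiftD' : ∀ c z : ℝ, HasDerivAt (fun s => deriv Ai (c + s))
      ((c + z) * Ai (c + z)) z := by
    intro c z
    exact HasDerivAt.comp_const_add c z (hODE (c + z))
  have hW : ∀ z, HasDerivAt W ((y - x) * (Ai (x + z) * Ai (y + z))) z := by
    intro z
    have h : HasDerivAt W _ z := ((hshiftD x z).mul (hshiftD' y z)).sub
      ((hshiftD y z).mul (hshiftD' x z))
    convert h using 1
    ring
  -- FTC on [0, T]
  have hFTC : ∀ T : ℝ, (∫ z in (0:ℝ)..T, (y - x) * (Ai (x + z) * Ai (y + z)))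
      = W T - W 0 := by
    intro T
    apply intervalIntegral.integral_eq_sub_of_hasDerivAt (fun t _ => hW t)
    apply Continuous.intervalIntegrable
    have := hdiff.continuous
    fun_prop
  -- limits
  set I : ℝ := ∫ z in Ioi (0:ℝ), Ai (x + z) * Ai (y + z) with hIdef
  have hIlim : Tendsto (fun T => ∫ z in (0:ℝ)..T, Ai (x + z) * Ai (y + z))
      atTop (nhds I) := intervalIntegral_tendsto_integral_Ioi 0 hint tendsto_id
  have hIlim' : Tendsto (fun T => ∫ z in (0:ℝ)..T, (y - x) * (Ai (x + z) * Ai (y + z)))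
      atTop (nhds ((y - x) * I)) := by
    have := hIlim.const_mul (y - x)
    simpa [intervalIntegral.integral_const_mul] using this
  have hzero : ∀ c : ℝ, Tendsto (fun T => Ai (c + T)) atTop (nhds 0) := fun c =>
    hdecay.comp (tendsto_atTop_add_const_left atTop c tendsto_id)
  have hzero' : ∀ c : ℝ, Tendsto (fun T => deriv Ai (c + T)) atTop (nhds 0) := fun c =>
    (B_to_zero hdiff hODE hdecay).comp (tendsto_atTop_add_const_left atTop c tendsto_id)
  have hWlim : Tendsto (fun T => W T - W 0) atTop (nhds (0 - W 0)) := by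
    apply Tendsto.sub_const
    have : Tendsto W atTop (nhds (0 * 0 - 0 * 0)) :=
      ((hzero x).mul (hzero' y)).sub ((hzero y).mul (hzero' x))
    simpa using this
  have heq : (y - x) * I = 0 - W 0 := by
    apply tendsto_nhds_unique _ hWlim
    have : (fun T => ∫ z in (0:ℝ)..T, (y - x) * (Ai (x + z) * Ai (y + z)))
        = fun T => W T - W 0 := funext hFTC
    rw [← this]
    exact hIlim'
  have hyx : y - x ≠ 0 := sub_ne_zero.mpr (Ne.symm hxy)
  have hxy' : x - y ≠ 0 := sub_ne_zero.mpr hxy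
  rw [hWdef] at heq
  simp only [add_zero] at heq
  rw [eq_div_iff hxy']
  linear_combination -heq
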